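/- arXiv:0901.2132 — 5 statements merged into one kernel-verified Lean document; each statement's English description precedes it below -/
import Mathlib

section
/- Define $a_1(t) = a e^{-\nu t}$ and for $k \ge 2$, $a_k(t) = 3ik\, e^{-\nu k^2 t} \int_0^t e^{\nu k^2 \tau} \sum_{k_1+k_2=k,\ k_1,k_2 \ge 1} a_{k_1}(\tau) a_{k_2}(\tau)\, d\tau$, where $a > 0$ and $\nu > 0$ are real. Then for every $k = 4n+j$ with $n \ge 0$ and $j \in \{1,2,3,4\}$, there exists a function $b_k(t) > 0$ for $t > 0$ such that $a_k(t) = i^{j-1} a^k b_k(t)$. -/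
open MeasureTheory Complex

lemma aux_stmt_2 (ν a0 : ℝ) (hν : 0 < ν) (ha0 : 0 < a0) (a : ℕ → ℝ → ℂ)
    (h1 : ∀ t : ℝ, a 1 t = (a0 : ℂ) * Real.exp (-ν * t))
    (hk : ∀ k : ℕ, 2 ≤ k → ∀ t : ℝ,
      a k t = 3 * Complex.I * k * Real.exp (-ν * k ^ 2 * t) *
        ∫ τ in (0 : ℝ)..t, (Real.exp (ν * k ^ 2 * τ) : ℂ) *
          ∑ j ∈ Finset.Ico 1 k, a j τ * a (k - j) τ) :
    ∀ k : ℕ, 1 ≤ k → ∃ b : ℝ → ℝ, Continuous b ∧ (∀ t : ℝ, 0 < t → 0 < b t) ∧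
      ∀ t : ℝ, a k t = Complex.I ^ (k - 1) * (a0 : ℂ) ^ k * (b t : ℂ) := by
  intro k
  induction k using Nat.strong_induction_on with
  | _ k IH =>
    intro hk1
    rcases eq_or_lt_of_le hk1 with h | h
    · refine ⟨fun t => Real.exp (-ν * t), Real.continuous_exp.comp (continuous_const.mul continuous_id), fun t _ => Real.exp_pos _, ?_⟩
      intro t
      rw [← h, h1 t]
      simp
    · have hk2 : 2 ≤ k := h
      have H : ∀ j : ℕ, ∃ b : ℝ → ℝ, 1 ≤ j → j < k →
          Continuous b ∧ (∀ t, 0 < t → 0 < b t) ∧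
          ∀ t, a j t = Complex.I ^ (j - 1) * (a0 : ℂ) ^ j * (b t : ℂ) := by
        intro j
        by_cases hj : 1 ≤ j ∧ j < k
        · obtain ⟨b, hb⟩ := IH j hj.2 hj.1
          exact ⟨b, fun _ _ => hb⟩
        · exact ⟨fun _ => 1, fun h1 h2 => absurd ⟨h1, h2⟩ hj⟩
      choose B hB using H
      set S : ℝ → ℝ := fun τ => ∑ j ∈ Finset.Ico 1 k, B j τ * B (k - j) τ with hSdef
      have hScont : Continuous S := by
        apply continuous_finset_sum
        intro j hj
        simp only [Finset.mem_Ico] at hj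
        exact (hB j hj.1 hj.2).1.mul (hB (k - j) (by omega) (by omega)).1
      have hSpos : ∀ τ : ℝ, 0 < τ → 0 < S τ := by
        intro τ hτ
        apply Finset.sum_pos
        · intro j hj
          simp only [Finset.mem_Ico] at hj
          exact mul_pos ((hB j hj.1 hj.2).2.1 τ hτ)
            ((hB (k - j) (by omega) (by omega)).2.1 τ hτ)
        · exact ⟨1, by simp only [Finset.mem_Ico]; omega⟩
      have hsum : ∀ τ : ℝ, (∑ j ∈ Finset.Ico 1 k, a j τ * a (k - j) τ)
          = Complex.I ^ (k - 2) * (a0 : ℂ) ^ k * (S τ : ℂ) := by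
        intro τ
        have : ∀ j ∈ Finset.Ico 1 k, a j τ * a (k - j) τ
            = Complex.I ^ (k - 2) * (a0 : ℂ) ^ k * ((B j τ * B (k - j) τ : ℝ) : ℂ) := by
          intro j hj
          simp only [Finset.mem_Ico] at hj
          rw [(hB j hj.1 hj.2).2.2 τ, (hB (k - j) (by omega) (by omega)).2.2 τ]
          have e1 : Complex.I ^ (k - 2) = Complex.I ^ (j - 1) * Complex.I ^ (k - j - 1) := by
            rw [← pow_add]; congr 1; omega
          have e2 : (a0 : ℂ) ^ k = (a0 : ℂ) ^ j * (a0 : ℂ) ^ (k - j) := by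
            rw [← pow_add]; congr 1; omega
          rw [e1, e2]
          push_cast
          ring
        rw [Finset.sum_congr rfl this, ← Finset.mul_sum]
        simp only [hSdef]
        push_cast
        ring
      set e : ℝ → ℝ := fun τ => Real.exp (ν * k ^ 2 * τ) with hedef
      have hint : ∀ t : ℝ, (∫ τ in (0 : ℝ)..t, (Real.exp (ν * k ^ 2 * τ) : ℂ) *
          ∑ j ∈ Finset.Ico 1 k, a j τ * a (k - j) τ)
          = Complex.I ^ (k - 2) * (a0 : ℂ) ^ k *
            ((∫ τ in (0 : ℝ)..t, e τ * S τ : ℝ) : ℂ) := by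
        intro t
        have : ∀ τ : ℝ, (Real.exp (ν * k ^ 2 * τ) : ℂ) *
            ∑ j ∈ Finset.Ico 1 k, a j τ * a (k - j) τ
            = (Complex.I ^ (k - 2) * (a0 : ℂ) ^ k) * ((e τ * S τ : ℝ) : ℂ) := by
          intro τ
          rw [hsum τ]
          simp only [hedef]
          push_cast
          ring
        simp_rw [this]
        rw [intervalIntegral.integral_const_mul, intervalIntegral.integral_ofReal]
      have hecont : Continuous (fun τ => e τ * S τ) := by
        exact (Real.continuous_exp.comp (continuous_const.mul continuous_id)).mul hScont
      set g : ℝ → ℝ := fun t => ∫ τ in (0 : ℝ)..t, e τ * S τ with hgdef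
      have hgcont : Continuous g := by
        exact intervalIntegral.continuous_primitive
          (fun a b => hecont.intervalIntegrable a b) 0
      have hgpos : ∀ t : ℝ, 0 < t → 0 < g t := by
        intro t ht
        apply intervalIntegral.intervalIntegral_pos_of_pos_on
          (hecont.intervalIntegrable 0 t)
        · intro τ hτ
          exact mul_pos (Real.exp_pos _) (hSpos τ hτ.1)
        · exact ht
      refine ⟨fun t => 3 * k * Real.exp (-ν * k ^ 2 * t) * g t, ?_, ?_, ?_⟩
      · exact (continuous_const.mul (Real.continuous_exp.comp (continuous_const.mul continuous_id))).mul hgcont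
      · intro t ht
        have h3k : (0 : ℝ) < 3 * k := by positivity
        exact mul_pos (mul_pos h3k (Real.exp_pos _)) (hgpos t ht)
      · intro t
        rw [hk k hk2 t, hint t]
        have e1 : Complex.I ^ (k - 1) = Complex.I * Complex.I ^ (k - 2) := by
          rw [← pow_succ']; congr 1; omega
        rw [e1]
        push_cast
        ring

theorem stmt_2 (ν a0 : ℝ) (hν : 0 < ν) (ha0 : 0 < a0) (a : ℕ → ℝ → ℂ)
    (h1 : ∀ t : ℝ, a 1 t = (a0 : ℂ) * Real.exp (-ν * t))
    (hk : ∀ k : ℕ, 2 ≤ k → ∀ t : ℝ,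
      a k t = 3 * Complex.I * k * Real.exp (-ν * k ^ 2 * t) *
        ∫ τ in (0 : ℝ)..t, (Real.exp (ν * k ^ 2 * τ) : ℂ) *
          ∑ j ∈ Finset.Ico 1 k, a j τ * a (k - j) τ) :
    ∀ n j : ℕ, 1 ≤ j → j ≤ 4 →
      ∃ b : ℝ → ℝ, (∀ t : ℝ, 0 < t → 0 < b t) ∧
        ∀ t : ℝ, a (4 * n + j) t = Complex.I ^ (j - 1) * (a0 : ℂ) ^ (4 * n + j) * (b t : ℂ) := by
  intro n j hj1 hj4
  obtain ⟨b, _, hbp, hbe⟩ := aux_stmt_2 ν a0 hν ha0 a h1 hk (4 * n + j) (by omega)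
  refine ⟨b, hbp, fun t => ?_⟩
  rw [hbe t]
  have : Complex.I ^ (4 * n + j - 1) = Complex.I ^ (j - 1) := by
    rw [show 4 * n + j - 1 = 4 * n + (j - 1) by omega, pow_add, pow_mul,
      Complex.I_pow_four, one_pow, one_mul]
  rw [this]
end

section
/- Let $\nu > 0$, $a > 0$, and define $a_1(t) = a e^{-\nu t}$ and for $k \ge 2$, $a_k(t) = 3ik\, e^{-\nu k^2 t} \int_0^t e^{\nu k^2 \tau} \sum_{k_1+k_2=k,\ k_1,k_2\ge 1} a_{k_1}(\tau) a_{k_2}(\tau)\, d\tau$. Then for every $k \ge 2$ and $t \ge 0$, $|a_k(t)| = 3k\, e^{-\nu k^2 t} \int_0^t e^{\nu k^2 \tau} \sum_{k_1+k_2=k} |a_{k_1}(\tau)|\,|a_{k_2}(\tau)|\, d\tau$. -/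
open MeasureTheory Complex

theorem stmt_3 (ν a0 : ℝ) (hν : 0 < ν) (ha0 : 0 < a0) (a : ℕ → ℝ → ℂ)
    (h1 : ∀ t : ℝ, a 1 t = (a0 : ℂ) * Real.exp (-ν * t))
    (hk : ∀ k : ℕ, 2 ≤ k → ∀ t : ℝ,
      a k t = 3 * Complex.I * k * Real.exp (-ν * k ^ 2 * t) *
        ∫ τ in (0 : ℝ)..t, (Real.exp (ν * k ^ 2 * τ) : ℂ) *
          ∑ j ∈ Finset.Ico 1 k, a j τ * a (k - j) τ) :
    ∀ k : ℕ, 2 ≤ k → ∀ t : ℝ, 0 ≤ t →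
      ‖a k t‖ = 3 * k * Real.exp (-ν * k ^ 2 * t) *
        ∫ τ in (0 : ℝ)..t, Real.exp (ν * k ^ 2 * τ) *
          ∑ j ∈ Finset.Ico 1 k, ‖a j τ‖ * ‖a (k - j) τ‖ := by
  have key : ∀ k : ℕ, 1 ≤ k → ∀ t : ℝ, 0 ≤ t →
      a k t = Complex.I ^ (k - 1) * (‖a k t‖ : ℂ) ∧
      (2 ≤ k → ‖a k t‖ = 3 * k * Real.exp (-ν * k ^ 2 * t) *
        ∫ τ in (0 : ℝ)..t, Real.exp (ν * k ^ 2 * τ) *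
          ∑ j ∈ Finset.Ico 1 k, ‖a j τ‖ * ‖a (k - j) τ‖) := by
    intro k
    induction k using Nat.strong_induction_on with
    | _ k ih =>
      intro hk1 t ht
      rcases eq_or_lt_of_le hk1 with h1' | hk2
      · -- k = 1
        subst h1'
        refine ⟨?_, by omega⟩
        rw [h1 t]
        rw [show ((a0 : ℂ) * Real.exp (-ν * t)) = ((a0 * Real.exp (-ν * t) : ℝ) : ℂ) by push_cast; ring]
        rw [Complex.norm_real, Real.norm_eq_abs, _root_.abs_of_nonneg (by positivity : (0:ℝ) ≤ a0 * Real.exp (-ν * t))]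
        simp
      · have hk2 : 2 ≤ k := hk2
        set R : ℝ := 3 * k * Real.exp (-ν * k ^ 2 * t) *
          ∫ τ in (0 : ℝ)..t, Real.exp (ν * k ^ 2 * τ) *
            ∑ j ∈ Finset.Ico 1 k, ‖a j τ‖ * ‖a (k - j) τ‖ with hR
        have hRnn : 0 ≤ R := by
          rw [hR]
          have hint : 0 ≤ ∫ τ in (0 : ℝ)..t, Real.exp (ν * k ^ 2 * τ) *
              ∑ j ∈ Finset.Ico 1 k, ‖a j τ‖ * ‖a (k - j) τ‖ := by
            apply intervalIntegral.integral_nonneg ht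
            intro τ _
            apply mul_nonneg (Real.exp_nonneg _)
            exact Finset.sum_nonneg fun j _ => mul_nonneg (norm_nonneg _) (norm_nonneg _)
          positivity
        have hmain : a k t = Complex.I ^ (k - 1) * (R : ℂ) := by
          rw [hk k hk2 t]
          have hcong : Set.EqOn
              (fun τ => (Real.exp (ν * k ^ 2 * τ) : ℂ) * ∑ j ∈ Finset.Ico 1 k, a j τ * a (k - j) τ)
              (fun τ => Complex.I ^ (k - 2) * ((Real.exp (ν * k ^ 2 * τ) *
                ∑ j ∈ Finset.Ico 1 k, ‖a j τ‖ * ‖a (k - j) τ‖ : ℝ) : ℂ))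
              (Set.uIcc 0 t) := by
            intro τ hτ
            have hτ0 : 0 ≤ τ := by
              rw [Set.uIcc_of_le ht] at hτ; exact hτ.1
            simp only
            have hsum : ∑ j ∈ Finset.Ico 1 k, a j τ * a (k - j) τ
                = Complex.I ^ (k - 2) *
                  ((∑ j ∈ Finset.Ico 1 k, ‖a j τ‖ * ‖a (k - j) τ‖ : ℝ) : ℂ) := by
              push_cast
              rw [Finset.mul_sum]
              apply Finset.sum_congr rfl
              intro j hj
              rw [Finset.mem_Ico] at hj
              rw [(ih j hj.2 hj.1 τ hτ0).1,
                  (ih (k - j) (by omega) (by omega) τ hτ0).1]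
              simp only [norm_mul, norm_pow, Complex.norm_I, one_pow, one_mul, Complex.norm_real, Real.norm_eq_abs,
                _root_.abs_of_nonneg (norm_nonneg _)]
              rw [show Complex.I ^ (k - 2) = Complex.I ^ (j - 1) * Complex.I ^ (k - j - 1) by
                rw [← pow_add]; congr 1; omega]
              ring
            rw [hsum]
            push_cast
            ring
          rw [intervalIntegral.integral_congr hcong,
              intervalIntegral.integral_const_mul, intervalIntegral.integral_ofReal]
          rw [show Complex.I ^ (k - 1) = Complex.I * Complex.I ^ (k - 2) by
            rw [← pow_succ']; congr 1; omega]
          push_cast [hR]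
          ring
        have habs : ‖a k t‖ = R := by
          rw [hmain]
          rw [norm_mul, norm_pow, Complex.norm_I, one_pow, one_mul, Complex.norm_real, Real.norm_eq_abs,
            _root_.abs_of_nonneg hRnn]
        exact ⟨by rw [habs]; exact hmain, fun _ => habs⟩
  intro k hk2 t ht
  exact (key k (by omega) t ht).2 hk2
end

section
/- Let $\nu = 1$, $T \ge T_0 := \sum_{k=2}^\infty \frac{1}{k^2} \ln\frac{3k-3}{2k-3}$, and $a > 0$ with $A := a e^{-T} \ge 1$. Define $a_1(t) = a e^{-t}$ and $a_k(t) = 3ik\, e^{-k^2 t} \int_0^t e^{k^2 \tau} \sum_{k_1+k_2=k} a_{k_1}(\tau) a_{k_2}(\tau) d\tau$ for $k \ge 2$. Then $|a_k(T)| \ge A^k$ for all $k \ge 1$. -/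
open MeasureTheory Complex

set_option linter.unusedSectionVars false


noncomputable def gterm (j : ℕ) : ℝ :=
  (1 / ((j : ℝ) + 2) ^ 2) * Real.log ((3 * ((j : ℝ) + 2) - 3) / (2 * ((j : ℝ) + 2) - 3))

lemma gterm_nonneg (j : ℕ) : 0 ≤ gterm j := by
  have hj : (0:ℝ) ≤ (j:ℝ) := Nat.cast_nonneg j
  apply mul_nonneg (by positivity)
  apply Real.log_nonneg
  rw [le_div_iff₀ (by linarith)]
  linarith

lemma gterm_summable : Summable gterm := by
  have hs : Summable (fun j : ℕ => Real.log 3 * (1 / ((j : ℝ) + 2) ^ 2)) := by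
    apply Summable.mul_left
    have := (summable_nat_add_iff (f := fun n : ℕ => 1 / (n : ℝ) ^ 2) 2).2
      (Real.summable_one_div_nat_pow.2 one_lt_two)
    exact this.congr (by intro n; push_cast; ring_nf)
  refine Summable.of_nonneg_of_le gterm_nonneg (fun j => ?_) hs
  have hj : (0:ℝ) ≤ (j:ℝ) := Nat.cast_nonneg j
  unfold gterm
  rw [mul_comm (Real.log 3)]
  have h2 : (0:ℝ) ≤ 1/((j:ℝ)+2)^2 := by positivity
  apply mul_le_mul_of_nonneg_left _ h2
  apply Real.log_le_log (by apply div_pos <;> linarith)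
  rw [div_le_iff₀ (by linarith)]
  linarith

noncomputable def tk (k : ℕ) : ℝ := ∑ j ∈ Finset.range (k - 1), gterm j

lemma tk_nonneg (k : ℕ) : 0 ≤ tk k := Finset.sum_nonneg fun j _ => gterm_nonneg j

lemma tk_mono {k m : ℕ} (h : k ≤ m) : tk k ≤ tk m :=
  Finset.sum_le_sum_of_subset_of_nonneg
    (Finset.range_subset_range.2 (by omega)) (fun j _ _ => gterm_nonneg j)

lemma tk_le_tsum (k : ℕ) : tk k ≤ ∑' j, gterm j :=
  Summable.sum_le_tsum _ (fun j _ => gterm_nonneg j) gterm_summable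


lemma key (a : ℕ → ℝ → ℂ) (a0 : ℝ) (ha0 : 0 < a0)
    (h1 : ∀ t : ℝ, a 1 t = (a0 : ℂ) * Real.exp (-t))
    (hk : ∀ k : ℕ, 2 ≤ k → ∀ t : ℝ,
      a k t = 3 * Complex.I * k * Real.exp (-(k : ℝ) ^ 2 * t) *
        ∫ τ in (0 : ℝ)..t, (Real.exp ((k : ℝ) ^ 2 * τ) : ℂ) *
          ∑ j ∈ Finset.Ico 1 k, a j τ * a (k - j) τ) :
    ∀ k : ℕ, 1 ≤ k → Continuous (a k) ∧
      (∀ t : ℝ, 0 ≤ t → a k t = Complex.I ^ (k - 1) * ((‖a k t‖ : ℝ) : ℂ)) ∧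
      (2 ≤ k → ∀ t : ℝ, 0 ≤ t → ‖a k t‖ =
        3 * k * Real.exp (-(k : ℝ) ^ 2 * t) *
          ∫ τ in (0 : ℝ)..t, Real.exp ((k : ℝ) ^ 2 * τ) *
            ∑ j ∈ Finset.Ico 1 k, ‖a j τ‖ * ‖a (k - j) τ‖) := by
  intro k
  induction k using Nat.strong_induction_on with
  | _ k ih =>
  intro hk1
  rcases eq_or_lt_of_le hk1 with h | h2
  · subst h
    have hfun : a 1 = fun t : ℝ => (a0 : ℂ) * Real.exp (-t) := funext h1
    refine ⟨?_, ?_, by omega⟩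
    · rw [hfun]
      exact continuous_const.mul (Complex.continuous_ofReal.comp
        (Real.continuous_exp.comp continuous_neg))
    · intro t _
      have habs : ‖a 1 t‖ = a0 * Real.exp (-t) := by
        rw [h1, norm_mul, Complex.norm_real, Real.norm_eq_abs, Complex.norm_real, Real.norm_eq_abs,
          abs_of_pos ha0, abs_of_pos (Real.exp_pos _)]
      rw [habs, h1]
      push_cast
      ring
  · -- 2 ≤ k
    have hk2 : 2 ≤ k := h2
    have hcont : ∀ j, 1 ≤ j → j < k → Continuous (a j) := fun j hj1 hjk => (ih j hjk hj1).1
    have hphase : ∀ j, 1 ≤ j → j < k → ∀ τ : ℝ, 0 ≤ τ →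
        a j τ = Complex.I ^ (j - 1) * ((‖a j τ‖ : ℝ) : ℂ) :=
      fun j hj1 hjk => (ih j hjk hj1).2.1
    -- continuity of the complex integrand
    have hg : Continuous (fun τ : ℝ => ((Real.exp ((k : ℝ) ^ 2 * τ) : ℝ) : ℂ) *
        ∑ j ∈ Finset.Ico 1 k, a j τ * a (k - j) τ) := by
      apply Continuous.mul
      · exact Complex.continuous_ofReal.comp (Real.continuous_exp.comp
          (continuous_const.mul continuous_id))
      · apply continuous_finset_sum
        intro j hj
        rw [Finset.mem_Ico] at hj
        exact (hcont j hj.1 (by omega)).mul (hcont (k - j) (by omega) (by omega))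
    have hCont : Continuous (a k) := by
      have hfun : a k = fun t : ℝ => 3 * Complex.I * k * (Real.exp (-(k : ℝ) ^ 2 * t) : ℝ) *
          ∫ τ in (0 : ℝ)..t, ((Real.exp ((k : ℝ) ^ 2 * τ) : ℝ) : ℂ) *
            ∑ j ∈ Finset.Ico 1 k, a j τ * a (k - j) τ := funext (hk k hk2)
      rw [hfun]
      apply Continuous.mul
      · apply Continuous.mul continuous_const
        exact Complex.continuous_ofReal.comp (Real.continuous_exp.comp
          (continuous_const.mul continuous_id))
      · exact intervalIntegral.continuous_primitive
          (fun x y => hg.intervalIntegrable x y) 0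
    -- magnitude formula
    have hmag : ∀ t : ℝ, 0 ≤ t → a k t = Complex.I ^ (k - 1) *
        ((3 * k * Real.exp (-(k : ℝ) ^ 2 * t) *
          ∫ τ in (0 : ℝ)..t, Real.exp ((k : ℝ) ^ 2 * τ) *
            ∑ j ∈ Finset.Ico 1 k, ‖a j τ‖ * ‖a (k - j) τ‖ : ℝ) : ℂ) := by
      intro t ht
      have hicc : Set.uIcc (0 : ℝ) t = Set.Icc 0 t := Set.uIcc_of_le ht
      have hcongr : ∀ τ ∈ Set.uIcc (0 : ℝ) t,
          ((Real.exp ((k : ℝ) ^ 2 * τ) : ℝ) : ℂ) * ∑ j ∈ Finset.Ico 1 k, a j τ * a (k - j) τ =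
          Complex.I ^ (k - 2) * ((Real.exp ((k : ℝ) ^ 2 * τ) *
            ∑ j ∈ Finset.Ico 1 k, ‖a j τ‖ * ‖a (k - j) τ‖ : ℝ) : ℂ) := by
        intro τ hτ
        rw [hicc] at hτ
        have hτ0 : 0 ≤ τ := hτ.1
        have hsum : ∑ j ∈ Finset.Ico 1 k, a j τ * a (k - j) τ =
            Complex.I ^ (k - 2) * ∑ j ∈ Finset.Ico 1 k,
              ((‖a j τ‖ * ‖a (k - j) τ‖ : ℝ) : ℂ) := by
          rw [Finset.mul_sum]
          apply Finset.sum_congr rfl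
          intro j hj
          rw [Finset.mem_Ico] at hj
          conv_lhs => rw [hphase j hj.1 (by omega) τ hτ0, hphase (k - j) (by omega) (by omega) τ hτ0]
          have hpow : Complex.I ^ (j - 1) * Complex.I ^ (k - j - 1) = Complex.I ^ (k - 2) := by
            rw [← pow_add]
            congr 1
            omega
          push_cast
          calc Complex.I ^ (j - 1) * (‖a j τ‖ : ℂ) *
                (Complex.I ^ (k - j - 1) * (‖a (k - j) τ‖ : ℂ))
              = (Complex.I ^ (j - 1) * Complex.I ^ (k - j - 1)) *
                ((‖a j τ‖ : ℂ) * (‖a (k - j) τ‖ : ℂ)) := by ring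
            _ = _ := by rw [hpow]
        rw [hsum]
        push_cast
        ring
      have hint : (∫ τ in (0 : ℝ)..t, ((Real.exp ((k : ℝ) ^ 2 * τ) : ℝ) : ℂ) *
          ∑ j ∈ Finset.Ico 1 k, a j τ * a (k - j) τ) =
          Complex.I ^ (k - 2) * ((∫ τ in (0 : ℝ)..t, Real.exp ((k : ℝ) ^ 2 * τ) *
            ∑ j ∈ Finset.Ico 1 k, ‖a j τ‖ * ‖a (k - j) τ‖ : ℝ) : ℂ) := by
        rw [intervalIntegral.integral_congr hcongr, intervalIntegral.integral_const_mul,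
          intervalIntegral.integral_ofReal]
      rw [hk k hk2 t, hint]
      have hk1' : k - 1 = (k - 2) + 1 := by omega
      rw [hk1', pow_succ]
      push_cast
      ring
    have hR : ∀ t : ℝ, 0 ≤ t → 0 ≤ 3 * (k : ℝ) * Real.exp (-(k : ℝ) ^ 2 * t) *
        ∫ τ in (0 : ℝ)..t, Real.exp ((k : ℝ) ^ 2 * τ) *
          ∑ j ∈ Finset.Ico 1 k, ‖a j τ‖ * ‖a (k - j) τ‖ := by
      intro t ht
      apply mul_nonneg (by positivity)
      apply intervalIntegral.integral_nonneg ht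
      intro x _
      apply mul_nonneg (Real.exp_pos _).le
      exact Finset.sum_nonneg fun j _ =>
        mul_nonneg (norm_nonneg _) (norm_nonneg _)
    have habs : ∀ t : ℝ, 0 ≤ t → ‖a k t‖ =
        3 * k * Real.exp (-(k : ℝ) ^ 2 * t) *
          ∫ τ in (0 : ℝ)..t, Real.exp ((k : ℝ) ^ 2 * τ) *
            ∑ j ∈ Finset.Ico 1 k, ‖a j τ‖ * ‖a (k - j) τ‖ := by
      intro t ht
      rw [hmag t ht, norm_mul, norm_pow, Complex.norm_I, one_pow, one_mul,
        Complex.norm_real, Real.norm_eq_abs, _root_.abs_of_nonneg (hR t ht)]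
    refine ⟨hCont, ?_, fun _ => habs⟩
    intro t ht
    rw [habs t ht]
    exact hmag t ht


lemma int_exp_mul (c A B : ℝ) (hc : c ≠ 0) :
    ∫ x in A..B, Real.exp (c * x) = (Real.exp (c * B) - Real.exp (c * A)) / c := by
  rw [intervalIntegral.integral_comp_mul_left (fun x => Real.exp x) hc, integral_exp,
    smul_eq_mul]
  ring

section
variable (T a0 A : ℝ)
  (hT' : ∀ k : ℕ, tk k ≤ T)
  (ha0 : 0 < a0) (hA : A = a0 * Real.exp (-T)) (hA1 : 1 ≤ A)
  (a : ℕ → ℝ → ℂ)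
  (h1 : ∀ t : ℝ, a 1 t = (a0 : ℂ) * Real.exp (-t))
  (K : ∀ k : ℕ, 1 ≤ k → Continuous (a k) ∧
      (∀ t : ℝ, 0 ≤ t → a k t = Complex.I ^ (k - 1) * ((‖a k t‖ : ℝ) : ℂ)) ∧
      (2 ≤ k → ∀ t : ℝ, 0 ≤ t → ‖a k t‖ =
        3 * k * Real.exp (-(k : ℝ) ^ 2 * t) *
          ∫ τ in (0 : ℝ)..t, Real.exp ((k : ℝ) ^ 2 * τ) *
            ∑ j ∈ Finset.Ico 1 k, ‖a j τ‖ * ‖a (k - j) τ‖))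
  (gterm_nonneg' : ∀ j, 0 ≤ gterm j)
  (int_exp_mul' : ∀ (c A B : ℝ), c ≠ 0 →
    ∫ x in A..B, Real.exp (c * x) = (Real.exp (c * B) - Real.exp (c * A)) / c)

include hT' ha0 hA hA1 h1 K gterm_nonneg' int_exp_mul' in
lemma main_bound : ∀ k : ℕ, 1 ≤ k → ∀ t : ℝ, tk k ≤ t → t ≤ T →
    A ^ k ≤ ‖a k t‖ := by
  have tk_nonneg : ∀ k, 0 ≤ tk k := fun k => Finset.sum_nonneg fun j _ => gterm_nonneg' j
  have tk_mono : ∀ {k m : ℕ}, k ≤ m → tk k ≤ tk m := by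
    intro k m h
    exact Finset.sum_le_sum_of_subset_of_nonneg
      (Finset.range_subset_range.2 (by omega)) (fun j _ _ => gterm_nonneg' j)
  have hA0 : 0 < A := lt_of_lt_of_le one_pos hA1
  intro k
  induction k using Nat.strong_induction_on with
  | _ k ih =>
  intro hk1 t htk htT
  rcases eq_or_lt_of_le hk1 with h | hk2
  · -- k = 1
    subst h
    have habs : ‖a 1 t‖ = a0 * Real.exp (-t) := by
      rw [h1, norm_mul, Complex.norm_real, Real.norm_eq_abs, Complex.norm_real, Real.norm_eq_abs,
        abs_of_pos ha0, abs_of_pos (Real.exp_pos _)]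
    rw [pow_one, habs, hA]
    exact mul_le_mul_of_nonneg_left (Real.exp_le_exp.2 (by linarith)) ha0.le
  · have hk2 : 2 ≤ k := hk2
    have ht0 : 0 ≤ t := le_trans (tk_nonneg k) htk
    have habs := (K k hk1).2.2 hk2 t ht0
    set s := tk (k - 1) with hs
    have hs0 : 0 ≤ s := tk_nonneg _
    have hst : s ≤ t := le_trans (tk_mono (by omega)) htk
    have hkr : (2 : ℝ) ≤ (k : ℝ) := by exact_mod_cast hk2
    -- continuity of the real integrand
    have hfS : Continuous (fun τ : ℝ => Real.exp ((k : ℝ) ^ 2 * τ) *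
        ∑ j ∈ Finset.Ico 1 k, ‖a j τ‖ * ‖a (k - j) τ‖) := by
      apply Continuous.mul
      · exact Real.continuous_exp.comp (continuous_const.mul continuous_id)
      · apply continuous_finset_sum
        intro j hj
        rw [Finset.mem_Ico] at hj
        exact (continuous_norm.comp (K j hj.1 |>.1)).mul
          (continuous_norm.comp (K (k - j) (by omega) |>.1))
    have hfg : Continuous (fun τ : ℝ => ((k : ℝ) - 1) * A ^ k * Real.exp ((k : ℝ) ^ 2 * τ)) :=
      continuous_const.mul (Real.continuous_exp.comp (continuous_const.mul continuous_id))
    -- pointwise lower bound on [s, t]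
    have hptwise : ∀ τ ∈ Set.Icc s t,
        ((k : ℝ) - 1) * A ^ k * Real.exp ((k : ℝ) ^ 2 * τ) ≤
        Real.exp ((k : ℝ) ^ 2 * τ) *
          ∑ j ∈ Finset.Ico 1 k, ‖a j τ‖ * ‖a (k - j) τ‖ := by
      intro τ hτ
      have hsum : ((k : ℝ) - 1) * A ^ k ≤
          ∑ j ∈ Finset.Ico 1 k, ‖a j τ‖ * ‖a (k - j) τ‖ := by
        have hterm : ∀ j ∈ Finset.Ico 1 k, A ^ k ≤
            ‖a j τ‖ * ‖a (k - j) τ‖ := by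
          intro j hj
          rw [Finset.mem_Ico] at hj
          have hj1 : A ^ j ≤ ‖a j τ‖ :=
            ih j hj.2 hj.1 τ (le_trans (tk_mono (by omega)) hτ.1) (hτ.2.trans htT)
          have hj2 : A ^ (k - j) ≤ ‖a (k - j) τ‖ :=
            ih (k - j) (by omega) (by omega) τ (le_trans (tk_mono (by omega)) hτ.1)
              (hτ.2.trans htT)
          have : A ^ k = A ^ j * A ^ (k - j) := by
            rw [← pow_add]; congr 1; omega
          rw [this]
          exact mul_le_mul hj1 hj2 (pow_nonneg hA0.le _) (norm_nonneg _)
        calc ((k : ℝ) - 1) * A ^ k = (Finset.Ico 1 k).card • A ^ k := by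
              rw [Nat.card_Ico, nsmul_eq_mul, Nat.cast_sub (by omega)]
              push_cast; ring
          _ ≤ _ := by
              rw [← Finset.sum_const]
              exact Finset.sum_le_sum hterm
      calc ((k : ℝ) - 1) * A ^ k * Real.exp ((k : ℝ) ^ 2 * τ)
          = Real.exp ((k : ℝ) ^ 2 * τ) * (((k : ℝ) - 1) * A ^ k) := by ring
        _ ≤ _ := mul_le_mul_of_nonneg_left hsum (Real.exp_pos _).le
    -- integral lower bound
    have hint1 : ∫ τ in s..t, ((k : ℝ) - 1) * A ^ k * Real.exp ((k : ℝ) ^ 2 * τ) ≤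
        ∫ τ in s..t, Real.exp ((k : ℝ) ^ 2 * τ) *
          ∑ j ∈ Finset.Ico 1 k, ‖a j τ‖ * ‖a (k - j) τ‖ :=
      intervalIntegral.integral_mono_on hst (hfg.intervalIntegrable _ _)
        (hfS.intervalIntegrable _ _) hptwise
    have hsplit : (∫ τ in (0 : ℝ)..s, Real.exp ((k : ℝ) ^ 2 * τ) *
          ∑ j ∈ Finset.Ico 1 k, ‖a j τ‖ * ‖a (k - j) τ‖) +
        (∫ τ in s..t, Real.exp ((k : ℝ) ^ 2 * τ) *
          ∑ j ∈ Finset.Ico 1 k, ‖a j τ‖ * ‖a (k - j) τ‖) =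
        ∫ τ in (0 : ℝ)..t, Real.exp ((k : ℝ) ^ 2 * τ) *
          ∑ j ∈ Finset.Ico 1 k, ‖a j τ‖ * ‖a (k - j) τ‖ :=
      intervalIntegral.integral_add_adjacent_intervals (hfS.intervalIntegrable _ _)
        (hfS.intervalIntegrable _ _)
    have hfirst : 0 ≤ ∫ τ in (0 : ℝ)..s, Real.exp ((k : ℝ) ^ 2 * τ) *
        ∑ j ∈ Finset.Ico 1 k, ‖a j τ‖ * ‖a (k - j) τ‖ := by
      apply intervalIntegral.integral_nonneg hs0
      intro x _
      exact mul_nonneg (Real.exp_pos _).le (Finset.sum_nonneg fun j _ =>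
        mul_nonneg (norm_nonneg _) (norm_nonneg _))
    have hk2ne : ((k : ℝ) ^ 2) ≠ 0 := by positivity
    have hconst : ∫ τ in s..t, ((k : ℝ) - 1) * A ^ k * Real.exp ((k : ℝ) ^ 2 * τ) =
        ((k : ℝ) - 1) * A ^ k *
          ((Real.exp ((k : ℝ) ^ 2 * t) - Real.exp ((k : ℝ) ^ 2 * s)) / (k : ℝ) ^ 2) := by
      rw [intervalIntegral.integral_const_mul, int_exp_mul' _ _ _ hk2ne]
    -- the time gap
    have hgap : Real.log ((3 * (k : ℝ) - 3) / (2 * (k : ℝ) - 3)) ≤ (k : ℝ) ^ 2 * (t - s) := by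
      have htk' : tk k = s + gterm (k - 2) := by
        rw [hs, tk, tk, show k - 1 = (k - 2) + 1 by omega, Finset.sum_range_succ]
        norm_num
      have hcast : ((k - 2 : ℕ) : ℝ) = (k : ℝ) - 2 := by
        rw [Nat.cast_sub (by omega)]; norm_num
      have hg : gterm (k - 2) = (1 / (k : ℝ) ^ 2) *
          Real.log ((3 * (k : ℝ) - 3) / (2 * (k : ℝ) - 3)) := by
        rw [gterm, hcast]; norm_num
      have hkpos : (0 : ℝ) < (k : ℝ) ^ 2 := by positivity
      have h2 : (1 / (k : ℝ) ^ 2) * Real.log ((3 * (k : ℝ) - 3) / (2 * (k : ℝ) - 3)) ≤ t - s := by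
        have h3 : s + gterm (k - 2) ≤ t := by rw [← htk']; exact htk
        rw [hg] at h3; linarith
      calc Real.log ((3 * (k : ℝ) - 3) / (2 * (k : ℝ) - 3))
          = (k : ℝ) ^ 2 * ((1 / (k : ℝ) ^ 2) *
            Real.log ((3 * (k : ℝ) - 3) / (2 * (k : ℝ) - 3))) := by field_simp
        _ ≤ (k : ℝ) ^ 2 * (t - s) := mul_le_mul_of_nonneg_left h2 hkpos.le
    have hu : Real.exp (-((k : ℝ) ^ 2 * (t - s))) ≤ (2 * (k : ℝ) - 3) / (3 * (k : ℝ) - 3) := by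
      have hrpos : 0 < (3 * (k : ℝ) - 3) / (2 * (k : ℝ) - 3) := by
        apply div_pos <;> linarith
      have h4 := Real.exp_le_exp.2 (neg_le_neg hgap)
      rw [Real.exp_neg, Real.exp_neg, Real.exp_log hrpos, inv_div] at h4
      rw [Real.exp_neg]
      exact h4
    -- put everything together
    set R := ∫ τ in (0 : ℝ)..t, Real.exp ((k : ℝ) ^ 2 * τ) *
        ∑ j ∈ Finset.Ico 1 k, ‖a j τ‖ * ‖a (k - j) τ‖ with hR
    have hRlb : ((k : ℝ) - 1) * A ^ k *
        ((Real.exp ((k : ℝ) ^ 2 * t) - Real.exp ((k : ℝ) ^ 2 * s)) / (k : ℝ) ^ 2) ≤ R := by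
      rw [← hconst, ← hsplit]
      linarith [hint1, hfirst]
    rw [habs]
    have hexp : Real.exp (-(k : ℝ) ^ 2 * t) *
        (Real.exp ((k : ℝ) ^ 2 * t) - Real.exp ((k : ℝ) ^ 2 * s)) =
        1 - Real.exp (-((k : ℝ) ^ 2 * (t - s))) := by
      rw [mul_sub, ← Real.exp_add, ← Real.exp_add,
        show -(k : ℝ) ^ 2 * t + (k : ℝ) ^ 2 * t = 0 by ring, Real.exp_zero]
      congr 1
      ring
    set u := Real.exp (-((k : ℝ) ^ 2 * (t - s))) with hudef
    have hupos : 0 < u := Real.exp_pos _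
    have hu3 : (3 * (k : ℝ) - 3) * u ≤ 2 * (k : ℝ) - 3 := by
      rw [← le_div_iff₀' (by linarith : (0:ℝ) < 3 * (k : ℝ) - 3)]
      exact hu
    have hFinal : A ^ k ≤ 3 * (k : ℝ) * Real.exp (-(k : ℝ) ^ 2 * t) *
        (((k : ℝ) - 1) * A ^ k *
          ((Real.exp ((k : ℝ) ^ 2 * t) - Real.exp ((k : ℝ) ^ 2 * s)) / (k : ℝ) ^ 2)) := by
      have heq : 3 * (k : ℝ) * Real.exp (-(k : ℝ) ^ 2 * t) *
          (((k : ℝ) - 1) * A ^ k *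
            ((Real.exp ((k : ℝ) ^ 2 * t) - Real.exp ((k : ℝ) ^ 2 * s)) / (k : ℝ) ^ 2)) =
          3 * ((k : ℝ) - 1) / (k : ℝ) * A ^ k * (1 - u) := by
        rw [hudef, ← hexp]
        field_simp
      rw [heq]
      have hAk : (0 : ℝ) < A ^ k := pow_pos hA0 _
      have hF : (k : ℝ) ≤ 3 * ((k : ℝ) - 1) * (1 - u) := by nlinarith [hu3]
      rw [div_mul_eq_mul_div, div_mul_eq_mul_div, le_div_iff₀ (by linarith : (0:ℝ) < (k:ℝ))]
      nlinarith [mul_le_mul_of_nonneg_right hF hAk.le]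
    calc A ^ k ≤ _ := hFinal
      _ ≤ 3 * (k : ℝ) * Real.exp (-(k : ℝ) ^ 2 * t) * R := by
          apply mul_le_mul_of_nonneg_left hRlb (by positivity)
end


theorem stmt_4 (T a0 A : ℝ)
    (hT : T ≥ ∑' k : ℕ, (1 / ((k : ℝ) + 2) ^ 2) *
        Real.log ((3 * ((k : ℝ) + 2) - 3) / (2 * ((k : ℝ) + 2) - 3)))
    (ha0 : 0 < a0) (hA : A = a0 * Real.exp (-T)) (hA1 : 1 ≤ A)
    (a : ℕ → ℝ → ℂ)
    (h1 : ∀ t : ℝ, a 1 t = (a0 : ℂ) * Real.exp (-t))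
    (hk : ∀ k : ℕ, 2 ≤ k → ∀ t : ℝ,
      a k t = 3 * Complex.I * k * Real.exp (-(k : ℝ) ^ 2 * t) *
        ∫ τ in (0 : ℝ)..t, (Real.exp ((k : ℝ) ^ 2 * τ) : ℂ) *
          ∑ j ∈ Finset.Ico 1 k, a j τ * a (k - j) τ) :
    ∀ k : ℕ, 1 ≤ k → A ^ k ≤ ‖a k T‖ := by
  have htsum : (∑' j : ℕ, gterm j) = ∑' k : ℕ, (1 / ((k : ℝ) + 2) ^ 2) *
      Real.log ((3 * ((k : ℝ) + 2) - 3) / (2 * ((k : ℝ) + 2) - 3)) := rfl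
  have hT' : ∀ k : ℕ, tk k ≤ T := fun k => (tk_le_tsum k).trans (htsum ▸ hT)
  have K := key a a0 ha0 h1 hk
  intro k hk1
  exact main_bound T a0 A hT' ha0 hA hA1 a h1 K gterm_nonneg
    (fun c A B hc => int_exp_mul c A B hc) k hk1 T (hT' k) le_rfl
end

section
/- Let $A \ge 1$ and suppose $|a_j(\tau)| \ge A^j$ for all $1 \le j \le k-1$ and all $\tau \in [t_{k-1}, t]$, where $t \ge t_{k-1} + \frac{1}{k^2}\ln\frac{3k-3}{2k-3}$. Then $3k\, e^{-k^2 t}\int_{t_{k-1}}^t e^{k^2 \tau} \sum_{k_1+k_2=k,\ k_1,k_2 \ge 1} |a_{k_1}(\tau)|\,|a_{k_2}(\tau)|\, d\tau \ge \frac{3(k-1)}{k}\left(1 - e^{-k^2(t - t_{k-1})}\right) A^k \ge A^k$. -/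
open MeasureTheory

theorem stmt_6 (A s t : ℝ) (k : ℕ) (hk : 2 ≤ k) (hA : 1 ≤ A)
    (a : ℕ → ℝ → ℂ) (hcont : ∀ j : ℕ, Continuous (a j))
    (ht : t ≥ s + (1 / (k : ℝ) ^ 2) *
      Real.log ((3 * (k : ℝ) - 3) / (2 * (k : ℝ) - 3)))
    (hlow : ∀ j : ℕ, 1 ≤ j → j ≤ k - 1 → ∀ τ ∈ Set.Icc s t, A ^ j ≤ ‖a j τ‖) :
    3 * (k : ℝ) * Real.exp (-(k : ℝ) ^ 2 * t) *
        (∫ τ in s..t, Real.exp ((k : ℝ) ^ 2 * τ) *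
          ∑ j ∈ Finset.Ico 1 k, ‖a j τ‖ * ‖a (k - j) τ‖)
      ≥ 3 * ((k : ℝ) - 1) / k * (1 - Real.exp (-(k : ℝ) ^ 2 * (t - s))) * A ^ k ∧
    3 * ((k : ℝ) - 1) / k * (1 - Real.exp (-(k : ℝ) ^ 2 * (t - s))) * A ^ k ≥ A ^ k := by
  set K : ℝ := (k : ℝ) with hKdef
  have hK2 : (2:ℝ) ≤ K := by rw [hKdef]; exact_mod_cast hk
  have hKpos : (0:ℝ) < K := by linarith
  have hK2pos : (0:ℝ) < K^2 := by positivity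
  have hden : (0:ℝ) < 2*K - 3 := by linarith
  have hnum : (0:ℝ) < 3*K - 3 := by linarith
  set L : ℝ := Real.log ((3*K-3)/(2*K-3)) with hLdef
  have hratio : 1 ≤ (3*K-3)/(2*K-3) := by rw [le_div_iff₀ hden]; linarith
  have hlog : 0 ≤ L := Real.log_nonneg hratio
  have hst : s ≤ t := by
    have h0 : 0 ≤ (1/K^2) * L := mul_nonneg (by positivity) hlog
    linarith [ht]
  have hexp_le : Real.exp (-K^2 * (t - s)) ≤ (2*K-3)/(3*K-3) := by
    have hel : (2*K-3)/(3*K-3) = Real.exp (Real.log ((2*K-3)/(3*K-3))) :=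
      (Real.exp_log (by positivity)).symm
    rw [hel]
    apply Real.exp_le_exp.mpr
    have hlneg : Real.log ((2*K-3)/(3*K-3)) = -L := by
      rw [hLdef, ← Real.log_inv]
      congr 1
      rw [inv_div]
    rw [hlneg]
    have h1 : (1/K^2) * L ≤ t - s := by linarith [ht]
    have h2 : K^2 * ((1/K^2) * L) = L := by field_simp
    nlinarith [h1, hK2pos]
  have hAk : (1:ℝ) ≤ A^k := one_le_pow₀ hA
  -- coefficient ≥ 1
  have hc : 1 ≤ 3*(K-1)/K * (1 - Real.exp (-K^2 * (t - s))) := by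
    have he2 : Real.exp (-K^2 * (t - s)) * (3*K-3) ≤ 2*K-3 := by
      have h := mul_le_mul_of_nonneg_right hexp_le hnum.le
      rwa [div_mul_cancel₀ _ (ne_of_gt hnum)] at h
    have heq : 3*(K-1)/K * (1 - Real.exp (-K^2 * (t - s)))
        = (3*(K-1) * (1 - Real.exp (-K^2 * (t - s)))) / K := by ring
    rw [heq, le_div_iff₀ hKpos, one_mul]
    nlinarith [he2]
  have hsecond : 3 * (K - 1) / K * (1 - Real.exp (-K ^ 2 * (t - s))) * A ^ k ≥ A ^ k := by
    nlinarith [hc, hAk]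
  -- pointwise sum lower bound
  have hsum : ∀ τ ∈ Set.Icc s t, (K - 1) * A ^ k ≤
      ∑ j ∈ Finset.Ico 1 k, ‖a j τ‖ * ‖a (k - j) τ‖ := by
    intro τ hτ
    have hterm : ∀ j ∈ Finset.Ico 1 k,
        A ^ k ≤ ‖a j τ‖ * ‖a (k - j) τ‖ := by
      intro j hj
      rw [Finset.mem_Ico] at hj
      obtain ⟨hj1, hj2⟩ := hj
      have ha1 := hlow j hj1 (by omega) τ hτ
      have ha2 := hlow (k - j) (by omega) (by omega) τ hτ
      have hA0 : (0:ℝ) < A := by linarith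
      have hsplit : A ^ k = A ^ j * A ^ (k - j) := by
        rw [← pow_add]; congr 1; omega
      rw [hsplit]
      exact mul_le_mul ha1 ha2 (by positivity) (norm_nonneg _)
    have := Finset.sum_le_sum hterm
    have hcard : ((Finset.Ico 1 k).card : ℝ) = K - 1 := by
      rw [Nat.card_Ico]
      push_cast [Nat.cast_sub (by omega : 1 ≤ k)]
      ring
    rw [Finset.sum_const, nsmul_eq_mul, hcard] at this
    exact this
  -- continuity / integrability
  have hFcont : Continuous (fun τ => Real.exp (K^2 * τ) *
      ∑ j ∈ Finset.Ico 1 k, ‖a j τ‖ * ‖a (k - j) τ‖) := by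
    apply Continuous.mul
    · exact Real.continuous_exp.comp (continuous_const.mul continuous_id)
    · apply continuous_finset_sum
      intro j _
      exact ((hcont j).norm).mul
        ((hcont (k - j)).norm)
  have hgcont : Continuous (fun τ : ℝ => Real.exp (K^2 * τ) * ((K - 1) * A ^ k)) :=
    (Real.continuous_exp.comp (continuous_const.mul continuous_id)).mul continuous_const
  have hmono : (∫ τ in s..t, Real.exp (K^2 * τ) * ((K - 1) * A ^ k)) ≤
      ∫ τ in s..t, Real.exp (K^2 * τ) *
        ∑ j ∈ Finset.Ico 1 k, ‖a j τ‖ * ‖a (k - j) τ‖ := by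
    apply intervalIntegral.integral_mono_on hst
      (hgcont.intervalIntegrable s t) (hFcont.intervalIntegrable s t)
    intro x hx
    have := hsum x hx
    have hep : 0 ≤ Real.exp (K^2 * x) := (Real.exp_pos _).le
    nlinarith [this, hep]
  -- compute the exponential integral
  have hd : ∀ x : ℝ, HasDerivAt (fun τ => Real.exp (K^2 * τ) / K^2)
      (Real.exp (K^2 * x)) x := by
    intro x
    have h1 : HasDerivAt (fun τ : ℝ => K^2 * τ) (K^2) x := by
      simpa using (hasDerivAt_id x).const_mul (K^2)
    have h2 := (Real.hasDerivAt_exp (K^2 * x)).comp x h1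
    have h3 := h2.div_const (K^2)
    rw [mul_div_cancel_right₀ _ hK2pos.ne'] at h3
    exact h3
  have hint : (∫ τ in s..t, Real.exp (K^2 * τ))
      = Real.exp (K^2 * t) / K^2 - Real.exp (K^2 * s) / K^2 := by
    apply intervalIntegral.integral_eq_sub_of_hasDerivAt (fun x _ => hd x)
    exact (Real.continuous_exp.comp (continuous_const.mul continuous_id)).intervalIntegrable s t
  have hgint : (∫ τ in s..t, Real.exp (K^2 * τ) * ((K - 1) * A ^ k))
      = (Real.exp (K^2 * t) / K^2 - Real.exp (K^2 * s) / K^2) * ((K - 1) * A ^ k) := by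
    rw [intervalIntegral.integral_mul_const, hint]
  have hfirst : 3 * K * Real.exp (-K ^ 2 * t) *
        (∫ τ in s..t, Real.exp (K ^ 2 * τ) *
          ∑ j ∈ Finset.Ico 1 k, ‖a j τ‖ * ‖a (k - j) τ‖)
      ≥ 3 * (K - 1) / K * (1 - Real.exp (-K ^ 2 * (t - s))) * A ^ k := by
    have hkey : 3 * (K - 1) / K * (1 - Real.exp (-K ^ 2 * (t - s))) * A ^ k
        = 3 * K * Real.exp (-K ^ 2 * t) *
          ((Real.exp (K^2 * t) / K^2 - Real.exp (K^2 * s) / K^2) * ((K - 1) * A ^ k)) := by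
      have e1 : Real.exp (-K^2 * t) = (Real.exp (K^2 * t))⁻¹ := by
        rw [← Real.exp_neg]; ring_nf
      have e2 : Real.exp (-K^2 * (t - s)) = Real.exp (K^2 * s) / Real.exp (K^2 * t) := by
        rw [← Real.exp_sub]; ring_nf
      rw [e1, e2]
      field_simp
    rw [hkey]
    apply mul_le_mul_of_nonneg_left _ (by positivity)
    rw [← hgint]
    exact hmono
  exact ⟨hfirst, hsecond⟩
end

section
/- Suppose for each $k \ge 1$ the coefficient $a_k(t)$ is of the form $\sum_{m=k}^{k^2} \alpha_{k,m} e^{-m\nu t}$ with $\alpha_{k,m} \in \mathbf{C}$, where the $a_k$ satisfy $a_1(t) = a e^{-\nu t}$ and $a_k(t) = 3ik\, e^{-\nu k^2 t}\int_0^t e^{\nu k^2 \tau} \sum_{k_1+k_2=k} a_{k_1}(\tau)a_{k_2}(\tau)\, d\tau$ for $k \ge 2$. Then $\alpha_{k,m} = 0$ whenever $k^2 - 2k + 2 < m < k^2$. -/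
open MeasureTheory Filter

lemma exp_tendsto_zero (r : ℝ) (hr : 0 < r) :
    Tendsto (fun t : ℝ => Complex.exp (-(r : ℂ) * t)) atTop (nhds 0) := by
  rw [tendsto_zero_iff_norm_tendsto_zero]
  have heq : ∀ t : ℝ, ‖Complex.exp (-(r:ℂ) * t)‖ = Real.exp (-r * t) := by
    intro t
    rw [show (-(r:ℂ) * t) = ((-r * t : ℝ) : ℂ) by push_cast; ring]
    simp [Complex.norm_exp]
  simp only [heq]
  exact Real.tendsto_exp_atBot.comp
    (Tendsto.const_mul_atTop_of_neg (neg_neg_iff_pos.mpr hr) tendsto_id)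

lemma exp_sum_indep (ν : ℝ) (hν : 0 < ν) (c : ℕ → ℂ) (S : Finset ℕ)
    (h : ∀ t : ℝ, ∑ m ∈ S, c m * Complex.exp (-(m : ℂ) * ν * t) = 0) :
    ∀ m ∈ S, c m = 0 := by
  induction S using Finset.strongInduction with
  | _ S ih =>
    rcases S.eq_empty_or_nonempty with rfl | hS
    · simp
    · set M := S.min' hS with hMdef
      have hMS : M ∈ S := S.min'_mem hS
      have hcM : c M = 0 := by
        have key : Tendsto (fun t : ℝ => ∑ m ∈ S, c m *
            Complex.exp (-((m : ℂ) - M) * ν * t)) atTop (nhds (c M)) := by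
          have hlim : ∀ m ∈ S, Tendsto (fun t : ℝ => c m *
              Complex.exp (-((m:ℂ) - M) * ν * t)) atTop
              (nhds (if m = M then c m else 0)) := by
            intro m hm
            by_cases hmM : m = M
            · have feq : (fun t : ℝ => c m * Complex.exp (-((m:ℂ) - M) * ν * t))
                  = fun _ => c m := by
                funext t; rw [hmM]; simp
              rw [feq, if_pos hmM]
              exact tendsto_const_nhds
            · simp only [if_neg hmM]
              have hMm : M < m := lt_of_le_of_ne (S.min'_le m hm) (Ne.symm hmM)
              have hMm' : (M:ℝ) < m := by exact_mod_cast hMm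
              have hr : (0:ℝ) < ((m:ℝ) - M) * ν :=
                mul_pos (sub_pos.mpr hMm') hν
              have := (exp_tendsto_zero _ hr).const_mul (c m)
              simp only [mul_zero] at this
              convert this using 2 with t
              congr 1
              push_cast; ring
          have := tendsto_finset_sum S hlim
          rwa [Finset.sum_ite_eq' S M c, if_pos hMS] at this
        have hzero : Tendsto (fun t : ℝ => ∑ m ∈ S, c m *
            Complex.exp (-((m : ℂ) - M) * ν * t)) atTop (nhds 0) := by
          have : ∀ t : ℝ, ∑ m ∈ S, c m * Complex.exp (-((m : ℂ) - M) * ν * t)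
              = (∑ m ∈ S, c m * Complex.exp (-(m : ℂ) * ν * t)) * Complex.exp ((M:ℂ) * ν * t) := by
            intro t
            rw [Finset.sum_mul]
            refine Finset.sum_congr rfl fun m _ => ?_
            rw [mul_assoc (c m), ← Complex.exp_add]
            congr 2
            ring
          simp only [this, h, zero_mul]
          exact tendsto_const_nhds
        exact tendsto_nhds_unique key hzero
      have hsub : S.erase M ⊂ S := Finset.erase_ssubset hMS
      have herase : ∀ m ∈ S.erase M, c m = 0 := by
        refine ih _ hsub fun t => ?_
        have := h t
        rw [← Finset.add_sum_erase S _ hMS, hcM, zero_mul, zero_add] at this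
        exact this
      intro m hm
      by_cases hmM : m = M
      · subst hmM; exact hcM
      · exact herase m (Finset.mem_erase.mpr ⟨hmM, hm⟩)

set_option maxHeartbeats 1000000 in
theorem stmt_13 (ν : ℝ) (hν : 0 < ν) (a0 : ℂ) (a : ℕ → ℝ → ℂ) (α : ℕ → ℕ → ℂ)
    (h1 : ∀ t : ℝ, a 1 t = a0 * Complex.exp (-(ν : ℂ) * t))
    (hk : ∀ k : ℕ, 2 ≤ k → ∀ t : ℝ,
      a k t = 3 * Complex.I * k * Real.exp (-ν * k ^ 2 * t) *
        ∫ τ in (0 : ℝ)..t, (Real.exp (ν * k ^ 2 * τ) : ℂ) *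
          ∑ j ∈ Finset.Ico 1 k, a j τ * a (k - j) τ)
    (hform : ∀ k : ℕ, 1 ≤ k → ∀ t : ℝ,
      a k t = ∑ m ∈ Finset.Icc k (k ^ 2), α k m * Complex.exp (-(m : ℂ) * ν * t)) :
    ∀ k m : ℕ, k ^ 2 - 2 * k + 2 < m → m < k ^ 2 → α k m = 0 := by
  intro k m hgap1 hgap2
  rcases lt_or_ge k 2 with hk2 | hk2
  · interval_cases k <;> omega
  have hk1 : 1 ≤ k := by omega
  have h2k : 2 * k ≤ k ^ 2 := by nlinarith
  have h3k : 3 * k ≤ k ^ 2 + 2 := by nlinarith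
  -- abbreviations
  set E : ℕ → ℝ → ℂ := fun n t => Complex.exp (-(n : ℂ) * ν * t) with hE
  set c : ℕ → ℂ := fun n => ((k:ℂ)^2 - n) * ν with hc
  have hcdef : ∀ n : ℕ, c n = ((k:ℂ)^2 - n) * ν := fun n => rfl
  have hEdef : ∀ n : ℕ, ∀ t : ℝ, E n t = Complex.exp (-(n : ℂ) * ν * t) := fun n t => rfl
  -- bounds for triples
  have htriple : ∀ j ∈ Finset.Ico 1 k, ∀ m1 ∈ Finset.Icc j (j^2),
      ∀ m2 ∈ Finset.Icc (k-j) ((k-j)^2), k ≤ m1 + m2 ∧ m1 + m2 + 2*k ≤ k^2 + 2 := by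
    intro j hj m1 hm1' m2 hm2'
    simp only [Finset.mem_Ico] at hj
    simp only [Finset.mem_Icc] at hm1' hm2'
    obtain ⟨j', rfl⟩ : ∃ j', j = j' + 1 := ⟨j - 1, by omega⟩
    obtain ⟨r', hr⟩ : ∃ r', k - (j'+1) = r' + 1 := ⟨k - j' - 2, by omega⟩
    rw [hr] at hm2'
    have hkeq : k = (j' + 1) + (r' + 1) := by omega
    constructor
    · omega
    · nlinarith [hm1'.2, hm2'.2, hkeq]
  have hne : ∀ n : ℕ, n + 2*k ≤ k^2 + 2 → c n ≠ 0 := by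
    intro n hn
    have hnk : n < k^2 := by omega
    have hlt : (n:ℝ) < (k:ℝ)^2 := by exact_mod_cast hnk
    rw [hcdef]
    refine mul_ne_zero (sub_ne_zero.mpr ?_) (by exact_mod_cast hν.ne')
    have : (n:ℝ) ≠ (k:ℝ)^2 := ne_of_lt hlt
    intro hcontra
    apply this
    exact_mod_cast hcontra.symm
  -- step A : pointwise expansion of the integrand
  have hA : ∀ τ : ℝ, (Real.exp (ν * (k:ℝ) ^ 2 * τ) : ℂ) *
        ∑ j ∈ Finset.Ico 1 k, a j τ * a (k - j) τ
      = ∑ j ∈ Finset.Ico 1 k, ∑ m1 ∈ Finset.Icc j (j^2),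
          ∑ m2 ∈ Finset.Icc (k-j) ((k-j)^2),
          (α j m1 * α (k-j) m2) * Complex.exp (c (m1+m2) * τ) := by
    intro τ
    rw [Finset.mul_sum]
    refine Finset.sum_congr rfl fun j hj => ?_
    simp only [Finset.mem_Ico] at hj
    rw [hform j hj.1 τ, hform (k-j) (by omega) τ, Finset.sum_mul_sum, Finset.mul_sum]
    refine Finset.sum_congr rfl fun m1 _ => ?_
    rw [Finset.mul_sum]
    refine Finset.sum_congr rfl fun m2 _ => ?_
    rw [Complex.ofReal_exp, hcdef]
    rw [show (((k:ℂ)^2 - (↑(m1+m2))) * ν * τ : ℂ)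
        = ((ν * (k:ℝ)^2 * τ : ℝ) : ℂ) + ((-(m1:ℂ) * ν * τ) + (-(m2:ℂ) * ν * τ)) by
      push_cast; ring]
    rw [Complex.exp_add, Complex.exp_add]
    ring
  -- basic integral of an exponential
  have hint : ∀ (A cc : ℂ), cc ≠ 0 → ∀ t : ℝ,
      (∫ τ in (0:ℝ)..t, A * Complex.exp (cc * τ)) = A * ((Complex.exp (cc*t) - 1)/cc) := by
    intro A cc hcc t
    rw [intervalIntegral.integral_const_mul, integral_exp_mul_complex hcc]
    norm_num
  have hcont : ∀ (A cc : ℂ), Continuous (fun τ : ℝ => A * Complex.exp (cc * τ)) := by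
    intro A cc
    exact continuous_const.mul (Complex.continuous_exp.comp
      (continuous_const.mul Complex.continuous_ofReal))
  -- step B : the integral
  have hB : ∀ t : ℝ, (∫ τ in (0:ℝ)..t, (Real.exp (ν * (k:ℝ)^2 * τ) : ℂ) *
        ∑ j ∈ Finset.Ico 1 k, a j τ * a (k - j) τ)
      = ∑ j ∈ Finset.Ico 1 k, ∑ m1 ∈ Finset.Icc j (j^2),
          ∑ m2 ∈ Finset.Icc (k-j) ((k-j)^2),
          (α j m1 * α (k-j) m2) *
            ((Complex.exp (c (m1+m2) * t) - 1) / c (m1+m2)) := by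
    intro t
    rw [intervalIntegral.integral_congr (g := fun τ => ∑ j ∈ Finset.Ico 1 k,
      ∑ m1 ∈ Finset.Icc j (j^2), ∑ m2 ∈ Finset.Icc (k-j) ((k-j)^2),
      (α j m1 * α (k-j) m2) * Complex.exp (c (m1+m2) * τ)) (fun τ _ => hA τ)]
    rw [intervalIntegral.integral_finset_sum (fun j _ =>
      ((continuous_finset_sum _ (fun m1 _ => continuous_finset_sum _
        (fun m2 _ => hcont _ _))).intervalIntegrable 0 t))]
    refine Finset.sum_congr rfl fun j hj => ?_
    rw [intervalIntegral.integral_finset_sum (fun m1 _ =>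
      ((continuous_finset_sum _ (fun m2 _ => hcont _ _)).intervalIntegrable 0 t))]
    refine Finset.sum_congr rfl fun m1 hm1' => ?_
    rw [intervalIntegral.integral_finset_sum (fun m2 _ => (hcont _ _).intervalIntegrable 0 t)]
    refine Finset.sum_congr rfl fun m2 hm2' => ?_
    exact hint _ _ (hne _ (htriple j hj m1 hm1' m2 hm2').2) t
  -- coefficients
  set γ : ℕ → ℕ → ℕ → ℂ := fun j m1 m2 =>
    3 * Complex.I * k * α j m1 * α (k-j) m2 / c (m1+m2) with hγ
  have hγdef : ∀ j m1 m2, γ j m1 m2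
      = 3 * Complex.I * k * α j m1 * α (k-j) m2 / c (m1+m2) := fun _ _ _ => rfl
  set G : ℂ := ∑ j ∈ Finset.Ico 1 k, ∑ m1 ∈ Finset.Icc j (j^2),
      ∑ m2 ∈ Finset.Icc (k-j) ((k-j)^2), γ j m1 m2 with hG
  set β : ℕ → ℂ := fun n =>
    (∑ j ∈ Finset.Ico 1 k, ∑ m1 ∈ Finset.Icc j (j^2),
      ∑ m2 ∈ Finset.Icc (k-j) ((k-j)^2), if m1 + m2 = n then γ j m1 m2 else 0)
      + (if n = k^2 then -G else 0) with hβ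
  have hβdef : ∀ n, β n = (∑ j ∈ Finset.Ico 1 k, ∑ m1 ∈ Finset.Icc j (j^2),
      ∑ m2 ∈ Finset.Icc (k-j) ((k-j)^2), if m1 + m2 = n then γ j m1 m2 else 0)
      + (if n = k^2 then -G else 0) := fun _ => rfl
  -- step C : closed form for a k
  have hC : ∀ t : ℝ, a k t = ∑ j ∈ Finset.Ico 1 k, ∑ m1 ∈ Finset.Icc j (j^2),
      ∑ m2 ∈ Finset.Icc (k-j) ((k-j)^2),
        γ j m1 m2 * (E (m1+m2) t - E (k^2) t) := by
    intro t
    rw [hk k hk2 t, hB t, Finset.mul_sum]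
    refine Finset.sum_congr rfl fun j hj => ?_
    rw [Finset.mul_sum]
    refine Finset.sum_congr rfl fun m1 hm1' => ?_
    rw [Finset.mul_sum]
    refine Finset.sum_congr rfl fun m2 hm2' => ?_
    have hX : (Real.exp (-ν * (k:ℝ)^2 * t) : ℂ) = E (k^2) t := by
      rw [hEdef, Complex.ofReal_exp]
      congr 1
      push_cast; ring
    have hEm : Complex.exp (c (m1+m2) * t) * E (k^2) t = E (m1+m2) t := by
      rw [hEdef, hEdef, hcdef, ← Complex.exp_add]
      congr 1
      push_cast; ring
    rw [hX, hγdef, ← hEm]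
    ring
  -- step D : a k as a combination over Icc k k^2 with coefficients β
  have hmemkk : k^2 ∈ Finset.Icc k (k^2) := Finset.mem_Icc.mpr ⟨by nlinarith, le_rfl⟩
  have hD : ∀ t : ℝ, a k t = ∑ n ∈ Finset.Icc k (k^2), β n * E n t := by
    intro t
    rw [hC t]
    have hsplit : ∀ n, β n * E n t =
        (∑ j ∈ Finset.Ico 1 k, ∑ m1 ∈ Finset.Icc j (j^2),
          ∑ m2 ∈ Finset.Icc (k-j) ((k-j)^2),
            if m1 + m2 = n then γ j m1 m2 * E n t else 0)
        + (if n = k^2 then -G * E n t else 0) := by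
      intro n
      rw [hβdef, add_mul, Finset.sum_mul]
      congr 1
      · refine Finset.sum_congr rfl fun j _ => ?_
        rw [Finset.sum_mul]
        refine Finset.sum_congr rfl fun m1 _ => ?_
        rw [Finset.sum_mul]
        refine Finset.sum_congr rfl fun m2 _ => ?_
        split <;> simp
      · split <;> simp
    simp only [hsplit]
    rw [Finset.sum_add_distrib]
    have hsecond : (∑ n ∈ Finset.Icc k (k^2), if n = k^2 then -G * E n t else 0)
        = -G * E (k^2) t := by
      rw [Finset.sum_ite_eq' (Finset.Icc k (k^2)) (k^2) (fun n => -G * E n t), if_pos hmemkk]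
    rw [hsecond]
    rw [Finset.sum_comm]
    have hfirst : ∀ j ∈ Finset.Ico 1 k,
        (∑ n ∈ Finset.Icc k (k^2), ∑ m1 ∈ Finset.Icc j (j^2),
          ∑ m2 ∈ Finset.Icc (k-j) ((k-j)^2),
            if m1 + m2 = n then γ j m1 m2 * E n t else 0)
        = ∑ m1 ∈ Finset.Icc j (j^2), ∑ m2 ∈ Finset.Icc (k-j) ((k-j)^2),
            γ j m1 m2 * E (m1+m2) t := by
      intro j hj
      rw [Finset.sum_comm]
      refine Finset.sum_congr rfl fun m1 hm1' => ?_
      rw [Finset.sum_comm]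
      refine Finset.sum_congr rfl fun m2 hm2' => ?_
      have hmem : m1 + m2 ∈ Finset.Icc k (k^2) := by
        obtain ⟨hl, hu⟩ := htriple j hj m1 hm1' m2 hm2'
        exact Finset.mem_Icc.mpr ⟨hl, by omega⟩
      rw [Finset.sum_ite_eq (Finset.Icc k (k^2)) (m1+m2) (fun n => γ j m1 m2 * E n t),
        if_pos hmem]
    rw [Finset.sum_congr rfl hfirst]
    have hGE : G * E (k^2) t = ∑ j ∈ Finset.Ico 1 k, ∑ m1 ∈ Finset.Icc j (j^2),
        ∑ m2 ∈ Finset.Icc (k-j) ((k-j)^2), γ j m1 m2 * E (k^2) t := by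
      rw [hG, Finset.sum_mul]
      refine Finset.sum_congr rfl fun j _ => ?_
      rw [Finset.sum_mul]
      refine Finset.sum_congr rfl fun m1 _ => ?_
      rw [Finset.sum_mul]
    rw [neg_mul, hGE]
    rw [← sub_eq_add_neg, ← Finset.sum_sub_distrib]
    refine Finset.sum_congr rfl fun j _ => ?_
    rw [← Finset.sum_sub_distrib]
    refine Finset.sum_congr rfl fun m1 _ => ?_
    rw [← Finset.sum_sub_distrib]
    refine Finset.sum_congr rfl fun m2 _ => ?_
    ring
  -- step E : compare coefficients
  have hdiff : ∀ t : ℝ, ∑ n ∈ Finset.Icc k (k^2),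
      (α k n - β n) * Complex.exp (-(n : ℂ) * ν * t) = 0 := by
    intro t
    have h1' := hform k hk1 t
    have h2' := hD t
    simp only [sub_mul, Finset.sum_sub_distrib]
    rw [← h1']
    have : ∑ n ∈ Finset.Icc k (k^2), β n * Complex.exp (-(n:ℂ) * ν * t)
        = ∑ n ∈ Finset.Icc k (k^2), β n * E n t := rfl
    rw [this, ← h2']
    ring
  have hmemm : m ∈ Finset.Icc k (k^2) := Finset.mem_Icc.mpr ⟨by omega, by omega⟩
  have hαβ := exp_sum_indep ν hν (fun n => α k n - β n) (Finset.Icc k (k^2)) hdiff m hmemm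
  have hβm : β m = 0 := by
    rw [hβdef]
    have hside : (if m = k^2 then -G else 0) = 0 := if_neg (by omega)
    rw [hside, add_zero]
    refine Finset.sum_eq_zero fun j hj => ?_
    refine Finset.sum_eq_zero fun m1 hm1' => ?_
    refine Finset.sum_eq_zero fun m2 hm2' => ?_
    have := (htriple j hj m1 hm1' m2 hm2').2
    exact if_neg (by omega)
  have : α k m - β m = 0 := hαβ
  rw [hβm] at this
  simpa using this
end
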